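/- Let L̃* = (1/2)Σ_{j=1}^n [p̃^j(1−p̃^j)/∏_{l<j} p̃^l] ∂²_j. If u is smooth with L̃*u = 0 in the open cube and extends C²-regularly to the open facet {p̃^m = 0}, then multiplying the equation by p̃^m and letting p̃^m → 0 shows that on the facet {p̃^m = 0} the restriction satisfies (1/2)Σ_{j>m} [p̃^j(1−p̃^j)/∏_{m<l<j} p̃^l] ∂²_j U = 0, i.e., all derivative terms with index j ≤ m disappear. -/

import Mathlib

set_option maxHeartbeats 1000000


/-- Partial derivative in the j-th coordinate direction. -/
noncomputable def pd {n : ℕ} (j : Fin n) (f : (Fin n → ℝ) → ℝ) : (Fin n → ℝ) → ℝ :=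
  fun p => fderiv ℝ f p (Pi.single j 1)

/-- Stem lemma, facet case b = 0. If L̃*u = 0 in the open cube and
the extension U is C²-regular up to the open facet {p̃^m = 0}, then on that facet
the restriction satisfies (1/2)Σ_{j>m} [p̃^j(1−p̃^j)/∏_{m<l<j} p̃^l] ∂²_j U = 0,
i.e. all derivative terms with index j ≤ m disappear. -/
theorem stem_lemma_facet_zero (n : ℕ) (m : Fin n) (u U : (Fin n → ℝ) → ℝ)
    (hUu : ∀ x, (∀ j, x j ∈ Set.Ioo (0:ℝ) 1) → U x = u x)
    (hcont : ContinuousOn U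
      ({x | ∀ j, x j ∈ Set.Ioo (0:ℝ) 1} ∪
       {x | x m = 0 ∧ ∀ j, j ≠ m → x j ∈ Set.Ioo (0:ℝ) 1}))
    (hder : ∀ j : Fin n, ContinuousOn (pd j (pd j U))
      ({x | ∀ j', x j' ∈ Set.Ioo (0:ℝ) 1} ∪
       {x | x m = 0 ∧ ∀ j', j' ≠ m → x j' ∈ Set.Ioo (0:ℝ) 1}))
    (heq : ∀ x : Fin n → ℝ, (∀ j, x j ∈ Set.Ioo (0:ℝ) 1) →
      (1/2) * ∑ j : Fin n,
        (x j * (1 - x j) /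
          ∏ l ∈ Finset.univ.filter (fun l : Fin n => l.val < j.val), x l)
        * pd j (pd j u) x = 0) :
    ∀ x : Fin n → ℝ, x m = 0 → (∀ j, j ≠ m → x j ∈ Set.Ioo (0:ℝ) 1) →
      (1/2) * ∑ j ∈ Finset.univ.filter (fun j : Fin n => m.val < j.val),
        (x j * (1 - x j) /
          ∏ l ∈ Finset.univ.filter
            (fun l : Fin n => m.val < l.val ∧ l.val < j.val), x l)
        * pd j (pd j U) x = 0 := by
  intro x hm hx
  set cube : Set (Fin n → ℝ) := {x | ∀ j, x j ∈ Set.Ioo (0:ℝ) 1} with hcubedef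
  set S : Set (Fin n → ℝ) :=
    cube ∪ {x | x m = 0 ∧ ∀ j, j ≠ m → x j ∈ Set.Ioo (0:ℝ) 1} with hSdef
  have hopen : IsOpen cube := by
    have : cube = Set.univ.pi fun _ : Fin n => Set.Ioo (0:ℝ) 1 := by
      ext y; simp [Set.mem_pi, hcubedef]
    rw [this]; exact isOpen_set_pi Set.finite_univ (fun _ _ => isOpen_Ioo)
  -- second derivatives of u and U agree on the open cube
  have hpd1 : ∀ j : Fin n, ∀ y ∈ cube, pd j u y = pd j U y := by
    intro j y hy
    have h1 : u =ᶠ[nhds y] U :=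
      Filter.eventuallyEq_of_mem (hopen.mem_nhds hy) (fun z hz => (hUu z hz).symm)
    simp [pd, h1.fderiv_eq]
  have hpd2 : ∀ j : Fin n, ∀ y ∈ cube, pd j (pd j u) y = pd j (pd j U) y := by
    intro j y hy
    have h1 : pd j u =ᶠ[nhds y] pd j U :=
      Filter.eventuallyEq_of_mem (hopen.mem_nhds hy) (hpd1 j)
    simp [pd, h1.fderiv_eq]
  have hxS : x ∈ S := Or.inr ⟨hm, hx⟩
  -- the path
  set xt : ℝ → (Fin n → ℝ) := fun t => Function.update x m t with hxtdef
  have hxt_ne : ∀ t : ℝ, ∀ l : Fin n, l ≠ m → xt t l = x l := by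
    intro t l hl; simp [hxtdef, Function.update_apply, hl]
  have hxt_m : ∀ t : ℝ, xt t m = t := by intro t; simp [hxtdef]
  have hxt0 : xt 0 = x := by
    funext l; by_cases hl : l = m
    · rw [hl, hxt_m, hm]
    · exact hxt_ne 0 l hl
  have hxt_cube : ∀ t ∈ Set.Ioo (0:ℝ) 1, xt t ∈ cube := by
    intro t ht l
    by_cases hl : l = m
    · rw [hl, hxt_m]; exact ht
    · rw [hxt_ne t l hl]; exact hx l hl
  have hxt_cont : Continuous xt := by
    apply continuous_pi
    intro l
    by_cases hl : l = m
    · subst hl; simpa [hxtdef, Function.update_apply] using continuous_id'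
    · simpa [hxtdef, Function.update_apply, hl] using (continuous_const : Continuous fun _ : ℝ => x l)
  have hxt_tendsto : Filter.Tendsto xt (nhdsWithin 0 (Set.Ioi 0)) (nhdsWithin x S) := by
    rw [tendsto_nhdsWithin_iff]
    constructor
    · have := hxt_cont.tendsto 0
      rw [hxt0] at this
      exact this.mono_left nhdsWithin_le_nhds
    · filter_upwards [Ioo_mem_nhdsGT_of_mem (by norm_num : (0:ℝ) ∈ Set.Ico (0:ℝ) 1)] with t ht
      exact Or.inl (hxt_cube t ht)
  have hDlim : ∀ j : Fin n, Filter.Tendsto (fun t => pd j (pd j U) (xt t))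
      (nhdsWithin 0 (Set.Ioi 0)) (nhds (pd j (pd j U) x)) :=
    fun j => ((hder j) x hxS).tendsto.comp hxt_tendsto
  -- constants
  set P : ℝ := ∏ l ∈ Finset.univ.filter (fun l : Fin n => l.val < m.val), x l with hPdef
  have hPpos : 0 < P := by
    apply Finset.prod_pos
    intro l hl
    simp only [Finset.mem_filter] at hl
    exact (hx l (by intro h; subst h; omega)).1
  -- the multiplied function
  set F : ℝ → ℝ := fun t => (1/2) * ∑ j : Fin n,
      (t * P * (xt t j * (1 - xt t j) /
        ∏ l ∈ Finset.univ.filter (fun l : Fin n => l.val < j.val), xt t l))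
      * pd j (pd j U) (xt t) with hFdef
  -- F vanishes on (0,1)
  have hF0 : ∀ t ∈ Set.Ioo (0:ℝ) 1, F t = 0 := by
    intro t ht
    have hc := hxt_cube t ht
    have h1 := heq (xt t) hc
    have h2 : ∑ j : Fin n, (xt t j * (1 - xt t j) /
        ∏ l ∈ Finset.univ.filter (fun l : Fin n => l.val < j.val), xt t l)
        * pd j (pd j u) (xt t)
        = ∑ j : Fin n, (xt t j * (1 - xt t j) /
        ∏ l ∈ Finset.univ.filter (fun l : Fin n => l.val < j.val), xt t l)
        * pd j (pd j U) (xt t) :=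
      Finset.sum_congr rfl (fun j _ => by rw [hpd2 j _ hc])
    rw [h2] at h1
    have h3 : F t = t * P * ((1/2) * ∑ j : Fin n, (xt t j * (1 - xt t j) /
        ∏ l ∈ Finset.univ.filter (fun l : Fin n => l.val < j.val), xt t l)
        * pd j (pd j U) (xt t)) := by
      rw [hFdef]
      simp only
      rw [Finset.mul_sum, Finset.mul_sum, Finset.mul_sum]
      apply Finset.sum_congr rfl
      intro j _
      ring
    rw [h3, h1, mul_zero]
  -- termwise limits
  set L : Fin n → ℝ := fun j => if m.val < j.val then
      (x j * (1 - x j) /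
        ∏ l ∈ Finset.univ.filter (fun l : Fin n => m.val < l.val ∧ l.val < j.val), x l)
      * pd j (pd j U) x else 0 with hLdef
  have hterm : ∀ j : Fin n, Filter.Tendsto (fun t =>
      (t * P * (xt t j * (1 - xt t j) /
        ∏ l ∈ Finset.univ.filter (fun l : Fin n => l.val < j.val), xt t l))
      * pd j (pd j U) (xt t)) (nhdsWithin 0 (Set.Ioi 0)) (nhds (L j)) := by
    intro j
    rcases lt_trichotomy j.val m.val with hjm | hjm | hjm
    · -- j < m : coefficient is t * const → 0
      have hne : j ≠ m := by intro h; subst h; omega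
      have hprod : ∀ t : ℝ, (∏ l ∈ Finset.univ.filter (fun l : Fin n => l.val < j.val), xt t l)
          = ∏ l ∈ Finset.univ.filter (fun l : Fin n => l.val < j.val), x l := by
        intro t
        apply Finset.prod_congr rfl
        intro l hl
        simp only [Finset.mem_filter] at hl
        exact hxt_ne t l (by intro h; subst h; omega)
      have heqfun : ∀ t : ℝ, (t * P * (xt t j * (1 - xt t j) /
          ∏ l ∈ Finset.univ.filter (fun l : Fin n => l.val < j.val), xt t l))
          * pd j (pd j U) (xt t)
          = (t * (P * (x j * (1 - x j) /
          ∏ l ∈ Finset.univ.filter (fun l : Fin n => l.val < j.val), x l)))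
          * pd j (pd j U) (xt t) := by
        intro t
        rw [hprod t, hxt_ne t j hne]; ring
      simp only [heqfun]
      have h1 : Filter.Tendsto (fun t : ℝ => t * (P * (x j * (1 - x j) /
          ∏ l ∈ Finset.univ.filter (fun l : Fin n => l.val < j.val), x l)))
          (nhdsWithin 0 (Set.Ioi 0)) (nhds 0) := by
        have := (continuous_id.mul (continuous_const (y := (P * (x j * (1 - x j) /
          ∏ l ∈ Finset.univ.filter (fun l : Fin n => l.val < j.val), x l))))).tendsto 0
        simp only [Pi.mul_def, id_eq, zero_mul] at this
        exact this.mono_left nhdsWithin_le_nhds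
      have := h1.mul (hDlim j)
      rw [zero_mul] at this
      have hL : L j = 0 := by simp [hLdef, not_lt.mpr (le_of_lt hjm)]; omega
      rw [hL]; exact this
    · -- j = m
      have hjm' : j = m := Fin.ext hjm
      subst hjm'
      have hprod : ∀ t : ℝ, (∏ l ∈ Finset.univ.filter (fun l : Fin n => l.val < j.val), xt t l)
          = P := by
        intro t
        rw [hPdef]
        apply Finset.prod_congr rfl
        intro l hl
        simp only [Finset.mem_filter] at hl
        exact hxt_ne t l (by intro h; subst h; omega)
      have heqfun : ∀ t : ℝ, (t * P * (xt t j * (1 - xt t j) /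
          ∏ l ∈ Finset.univ.filter (fun l : Fin n => l.val < j.val), xt t l))
          * pd j (pd j U) (xt t)
          = (t * P * (t * (1 - t) / P)) * pd j (pd j U) (xt t) := by
        intro t
        rw [hprod t, hxt_m t]
      simp only [heqfun]
      have h1 : Filter.Tendsto (fun t : ℝ => t * P * (t * (1 - t) / P))
          (nhdsWithin 0 (Set.Ioi 0)) (nhds 0) := by
        have hc : Continuous fun t : ℝ => t * P * (t * (1 - t) / P) :=
          (continuous_id.mul continuous_const).mul
            ((continuous_id.mul (continuous_const.sub continuous_id)).div_const P)
        have := hc.tendsto 0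
        simp only [zero_mul, mul_zero, zero_div] at this
        exact this.mono_left nhdsWithin_le_nhds
      have := h1.mul (hDlim j)
      rw [zero_mul] at this
      have hL : L j = 0 := by simp [hLdef]
      rw [hL]; exact this
    · -- m < j : on t > 0 the coefficient is constantly x j (1-x j)/Q
      have hne : j ≠ m := by intro h; subst h; omega
      set Q : ℝ := ∏ l ∈ Finset.univ.filter
          (fun l : Fin n => m.val < l.val ∧ l.val < j.val), x l with hQdef
      have hQpos : 0 < Q := by
        apply Finset.prod_pos
        intro l hl
        simp only [Finset.mem_filter] at hl
        exact (hx l (by intro h; subst h; omega)).1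
      have hmmem : m ∈ Finset.univ.filter (fun l : Fin n => l.val < j.val) := by
        simp only [Finset.mem_filter, Finset.mem_univ, true_and]; exact hjm
      have hsplit : ∀ t : ℝ, (∏ l ∈ Finset.univ.filter (fun l : Fin n => l.val < j.val), xt t l)
          = t * (P * Q) := by
        intro t
        rw [← Finset.mul_prod_erase _ _ hmmem, hxt_m]
        congr 1
        have herase : (Finset.univ.filter (fun l : Fin n => l.val < j.val)).erase m
            = Finset.univ.filter (fun l : Fin n => l.val < m.val) ∪
              Finset.univ.filter (fun l : Fin n => m.val < l.val ∧ l.val < j.val) := by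
          ext l
          simp only [Finset.mem_erase, Finset.mem_filter, Finset.mem_union, Finset.mem_univ,
            true_and, ne_eq, Fin.ext_iff]
          omega
        have hdisj : Disjoint (Finset.univ.filter (fun l : Fin n => l.val < m.val))
            (Finset.univ.filter (fun l : Fin n => m.val < l.val ∧ l.val < j.val)) := by
          rw [Finset.disjoint_left]
          intro l hl1 hl2
          simp only [Finset.mem_filter] at hl1 hl2
          omega
        rw [herase, Finset.prod_union hdisj, hPdef, hQdef]
        congr 1
        · apply Finset.prod_congr rfl
          intro l hl
          simp only [Finset.mem_filter] at hl
          exact hxt_ne t l (by intro h; subst h; omega)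
        · apply Finset.prod_congr rfl
          intro l hl
          simp only [Finset.mem_filter] at hl
          exact hxt_ne t l (by intro h; subst h; omega)
      have heqfun : ∀ t ∈ Set.Ioi (0:ℝ), (x j * (1 - x j) / Q) * pd j (pd j U) (xt t)
          = (t * P * (xt t j * (1 - xt t j) /
          ∏ l ∈ Finset.univ.filter (fun l : Fin n => l.val < j.val), xt t l))
          * pd j (pd j U) (xt t) := by
        intro t ht
        rw [hsplit t, hxt_ne t j hne]
        have ht' : t ≠ 0 := ne_of_gt ht
        have hP' : P ≠ 0 := ne_of_gt hPpos
        have hQ' : Q ≠ 0 := ne_of_gt hQpos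
        congr 1
        field_simp
      have hconst : Filter.Tendsto (fun t : ℝ => (x j * (1 - x j) / Q) * pd j (pd j U) (xt t))
          (nhdsWithin 0 (Set.Ioi 0)) (nhds ((x j * (1 - x j) / Q) * pd j (pd j U) x)) :=
        tendsto_const_nhds.mul (hDlim j)
      have hev : (fun t : ℝ => (x j * (1 - x j) / Q) * pd j (pd j U) (xt t)) =ᶠ[nhdsWithin 0 (Set.Ioi 0)]
          (fun t : ℝ => (t * P * (xt t j * (1 - xt t j) /
          ∏ l ∈ Finset.univ.filter (fun l : Fin n => l.val < j.val), xt t l))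
          * pd j (pd j U) (xt t)) :=
        Filter.eventuallyEq_of_mem self_mem_nhdsWithin heqfun
      have hL : L j = (x j * (1 - x j) / Q) * pd j (pd j U) x := by
        simp only [hLdef, if_pos hjm, hQdef]
      rw [hL]
      exact hconst.congr' hev
  -- combine
  have hFlim : Filter.Tendsto F (nhdsWithin 0 (Set.Ioi 0))
      (nhds ((1/2) * ∑ j : Fin n, L j)) := by
    rw [hFdef]
    exact (Filter.Tendsto.const_mul _ (tendsto_finset_sum _ (fun j _ => hterm j)))
  have hFlim0 : Filter.Tendsto F (nhdsWithin 0 (Set.Ioi 0)) (nhds 0) := by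
    have hev : F =ᶠ[nhdsWithin 0 (Set.Ioi 0)] (fun _ => (0:ℝ)) := by
      filter_upwards [Ioo_mem_nhdsGT_of_mem (by norm_num : (0:ℝ) ∈ Set.Ico (0:ℝ) 1)] with t ht
      exact hF0 t ht
    exact Filter.Tendsto.congr' hev.symm tendsto_const_nhds
  have hmain : (1/2) * ∑ j : Fin n, L j = 0 :=
    tendsto_nhds_unique hFlim hFlim0
  have hfinal : ∑ j ∈ Finset.univ.filter (fun j : Fin n => m.val < j.val),
      (x j * (1 - x j) /
        ∏ l ∈ Finset.univ.filter (fun l : Fin n => m.val < l.val ∧ l.val < j.val), x l)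
      * pd j (pd j U) x = ∑ j : Fin n, L j := by
    rw [Finset.sum_filter]
  rw [hfinal, hmain]
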